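/- For a connected graph G on n ≥ 2 vertices, the resistance spectral radius satisfies ρ_1(G) ≥ sqrt( (T_1² + ⋯ + T_n²) / (R_1² + ⋯ + R_n²) ), with equality if and only if G is pseudo resistance regular. -/

import Mathlib

open Matrix BigOperators Finset
open scoped RealInnerProductSpace

noncomputable def allOnes (V : Type*) : Matrix V V ℝ := Matrix.of fun _ _ => 1

/-- The resistance distance matrix of a connected graph, via the matrix
`X = (L + (1/n)J)⁻¹`: `r_ij = X_ii + X_jj - 2X_ij`. -/
noncomputable def resistMatrix {V : Type*} [Fintype V] [DecidableEq V]
    (G : SimpleGraph V) [DecidableRel G.Adj] : Matrix V V ℝ :=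
  Matrix.of fun i j =>
    (G.lapMatrix ℝ + (Fintype.card V : ℝ)⁻¹ • allOnes V)⁻¹ i i +
    (G.lapMatrix ℝ + (Fintype.card V : ℝ)⁻¹ • allOnes V)⁻¹ j j -
    2 * (G.lapMatrix ℝ + (Fintype.card V : ℝ)⁻¹ • allOnes V)⁻¹ i j

/-- `W` is the Moore-Penrose inverse of `L`. -/
def IsMoorePenrose {V : Type*} [Fintype V] [DecidableEq V] (L W : Matrix V V ℝ) : Prop :=
  L * W * L = L ∧ W * L * W = W ∧ (L * W)ᵀ = L * W ∧ (W * L)ᵀ = W * L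

/-- Resistance degree `R_i`. -/
noncomputable def rdeg {V : Type*} [Fintype V] [DecidableEq V]
    (G : SimpleGraph V) [DecidableRel G.Adj] (i : V) : ℝ :=
  ∑ j, resistMatrix G i j

/-- Second resistance degree `T_i`. -/
noncomputable def rdeg2 {V : Type*} [Fintype V] [DecidableEq V]
    (G : SimpleGraph V) [DecidableRel G.Adj] (i : V) : ℝ :=
  ∑ j, resistMatrix G i j * rdeg G j

/-! ### Spectral toolbox -/

lemma dot_mulVec_double {m : ℕ} (B : Matrix (Fin m) (Fin m) ℝ) (u w : Fin m → ℝ) :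
    u ⬝ᵥ (B *ᵥ w) = ∑ j, ∑ k, u j * (B j k * w k) := by
  simp [dotProduct, mulVec, Finset.mul_sum]

section Spectral
variable {n : ℕ} {A : Matrix (Fin n) (Fin n) ℝ} (hA : A.IsHermitian)

instance instCoeFunToEuclid : Coe (Fin n → ℝ) (EuclideanSpace ℝ (Fin n)) := ⟨WithLp.toLp 2⟩

lemma repr_mulVec (v : EuclideanSpace ℝ (Fin n)) (i : Fin n) :
    hA.eigenvectorBasis.repr (A *ᵥ v) i
      = hA.eigenvalues i * hA.eigenvectorBasis.repr v i := by
  simp only [OrthonormalBasis.repr_apply_apply, PiLp.inner_apply, RCLike.inner_apply,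
    conj_trivial]
  have h : ∀ w : Fin n → ℝ, ∑ k, w k * (hA.eigenvectorBasis i) k
      = w ⬝ᵥ (hA.eigenvectorBasis i : Fin n → ℝ) := fun w => rfl
  rw [h, h, dotProduct_comm, dotProduct_mulVec, ← mulVec_transpose, show Aᵀ = A from hA]
  erw [hA.mulVec_eigenvectorBasis, smul_dotProduct, smul_eq_mul, dotProduct_comm]

lemma dot_eq_sum_repr (u v : Fin n → ℝ) :
    u ⬝ᵥ v = ∑ i, hA.eigenvectorBasis.repr u i * hA.eigenvectorBasis.repr v i := by
  have h := hA.eigenvectorBasis.repr.inner_map_map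
    (u : EuclideanSpace ℝ (Fin n)) (v : EuclideanSpace ℝ (Fin n))
  simp only [PiLp.inner_apply, RCLike.inner_apply, conj_trivial] at h
  rw [dotProduct_comm]
  exact h.symm.trans (Finset.sum_congr rfl fun i _ => mul_comm _ _)

lemma dot_mulVec_eq_sum (v : Fin n → ℝ) :
    v ⬝ᵥ (A *ᵥ v) = ∑ i, hA.eigenvalues i * (hA.eigenvectorBasis.repr v i)^2 := by
  rw [dot_eq_sum_repr hA]
  refine Finset.sum_congr rfl fun i _ => ?_
  rw [repr_mulVec hA]
  ring

lemma dot_mulVec_le {ρ : ℝ} (hmax : ∀ i, hA.eigenvalues i ≤ ρ) (v : Fin n → ℝ) :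
    v ⬝ᵥ (A *ᵥ v) ≤ ρ * (v ⬝ᵥ v) := by
  rw [dot_mulVec_eq_sum hA, dot_eq_sum_repr hA, Finset.mul_sum]
  refine Finset.sum_le_sum fun i _ => ?_
  have := sq_nonneg (hA.eigenvectorBasis.repr v i)
  nlinarith [hmax i]

lemma eq_of_dot_mulVec_eq {ρ : ℝ} (hmax : ∀ i, hA.eigenvalues i ≤ ρ) (v : Fin n → ℝ)
    (heq : v ⬝ᵥ (A *ᵥ v) = ρ * (v ⬝ᵥ v)) : A *ᵥ v = ρ • v := by
  have hcoord : ∀ i, (ρ - hA.eigenvalues i) * (hA.eigenvectorBasis.repr v i)^2 = 0 := by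
    have hsum : ∑ i, (ρ - hA.eigenvalues i) * (hA.eigenvectorBasis.repr v i)^2 = 0 := by
      rw [dot_mulVec_eq_sum hA, dot_eq_sum_repr hA, Finset.mul_sum] at heq
      have : ∑ i, (ρ - hA.eigenvalues i) * (hA.eigenvectorBasis.repr v i)^2
          = ∑ i, (ρ * (hA.eigenvectorBasis.repr v i * hA.eigenvectorBasis.repr v i)
            - hA.eigenvalues i * (hA.eigenvectorBasis.repr v i)^2) := by
        refine Finset.sum_congr rfl fun i _ => by ring
      rw [this, Finset.sum_sub_distrib, heq, sub_self]
    intro i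
    refine (Finset.sum_eq_zero_iff_of_nonneg fun j _ => ?_).1 hsum i (Finset.mem_univ i)
    have := sq_nonneg (hA.eigenvectorBasis.repr v j)
    nlinarith [hmax j]
  have : hA.eigenvectorBasis.repr ((A *ᵥ v : Fin n → ℝ) : EuclideanSpace ℝ (Fin n))
      = hA.eigenvectorBasis.repr ((ρ • v : Fin n → ℝ) : EuclideanSpace ℝ (Fin n)) := by
    ext i
    rw [repr_mulVec hA]
    have h2 : hA.eigenvectorBasis.repr ((ρ • v : Fin n → ℝ) : EuclideanSpace ℝ (Fin n)) i
        = ρ * hA.eigenvectorBasis.repr v i := by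
      have : ((ρ • v : Fin n → ℝ) : EuclideanSpace ℝ (Fin n))
          = ρ • (v : EuclideanSpace ℝ (Fin n)) := rfl
      rw [this, _root_.map_smul]
      rfl
    rw [h2]
    rcases mul_eq_zero.1 (hcoord i) with h | h
    · have : hA.eigenvalues i = ρ := by linarith
      rw [this]
    · have : hA.eigenvectorBasis.repr v i = 0 := by nlinarith [h]
      rw [this]; ring
  exact WithLp.toLp_injective 2 (hA.eigenvectorBasis.repr.injective this)

lemma dot_mulVec_sq_le {ρ : ℝ} (habs : ∀ i, |hA.eigenvalues i| ≤ ρ) (v : Fin n → ℝ) :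
    (A *ᵥ v) ⬝ᵥ (A *ᵥ v) ≤ ρ^2 * (v ⬝ᵥ v) := by
  rw [dot_eq_sum_repr hA (A *ᵥ v) (A *ᵥ v), dot_eq_sum_repr hA v v, Finset.mul_sum]
  refine Finset.sum_le_sum fun i _ => ?_
  rw [repr_mulVec hA]
  have h1 : (hA.eigenvalues i)^2 ≤ ρ^2 := by
    have := habs i; have := abs_nonneg (hA.eigenvalues i); nlinarith [sq_abs (hA.eigenvalues i)]
  nlinarith [sq_nonneg (hA.eigenvectorBasis.repr v i)]

lemma mulVec_mulVec_of_dot_sq_eq {ρ : ℝ} (habs : ∀ i, |hA.eigenvalues i| ≤ ρ) (v : Fin n → ℝ)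
    (heq : (A *ᵥ v) ⬝ᵥ (A *ᵥ v) = ρ^2 * (v ⬝ᵥ v)) : A *ᵥ (A *ᵥ v) = (ρ^2) • v := by
  have hcoord : ∀ i, (ρ^2 - (hA.eigenvalues i)^2) * (hA.eigenvectorBasis.repr v i)^2 = 0 := by
    have hsum : ∑ i, (ρ^2 - (hA.eigenvalues i)^2) * (hA.eigenvectorBasis.repr v i)^2 = 0 := by
      rw [dot_eq_sum_repr hA (A *ᵥ v) (A *ᵥ v), dot_eq_sum_repr hA v v, Finset.mul_sum] at heq
      have : ∑ i, (ρ^2 - (hA.eigenvalues i)^2) * (hA.eigenvectorBasis.repr v i)^2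
          = ∑ i, (ρ^2 * (hA.eigenvectorBasis.repr v i * hA.eigenvectorBasis.repr v i)
            - hA.eigenvectorBasis.repr (A *ᵥ v) i * hA.eigenvectorBasis.repr (A *ᵥ v) i) := by
        refine Finset.sum_congr rfl fun i _ => ?_
        rw [repr_mulVec hA]; ring
      rw [this, Finset.sum_sub_distrib, heq, sub_self]
    intro i
    refine (Finset.sum_eq_zero_iff_of_nonneg fun j _ => ?_).1 hsum i (Finset.mem_univ i)
    have h1 : (hA.eigenvalues j)^2 ≤ ρ^2 := by
      have := habs j; have := abs_nonneg (hA.eigenvalues j); nlinarith [sq_abs (hA.eigenvalues j)]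
    nlinarith [sq_nonneg (hA.eigenvectorBasis.repr v j)]
  have : hA.eigenvectorBasis.repr ((A *ᵥ (A *ᵥ v) : Fin n → ℝ) : EuclideanSpace ℝ (Fin n))
      = hA.eigenvectorBasis.repr (((ρ^2) • v : Fin n → ℝ) : EuclideanSpace ℝ (Fin n)) := by
    ext i
    rw [repr_mulVec hA, repr_mulVec hA]
    have h2 : hA.eigenvectorBasis.repr (((ρ^2) • v : Fin n → ℝ) : EuclideanSpace ℝ (Fin n)) i
        = ρ^2 * hA.eigenvectorBasis.repr v i := by
      have : (((ρ^2) • v : Fin n → ℝ) : EuclideanSpace ℝ (Fin n))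
          = (ρ^2) • (v : EuclideanSpace ℝ (Fin n)) := rfl
      rw [this, _root_.map_smul]
      rfl
    rw [h2]
    nlinarith [hcoord i]
  exact WithLp.toLp_injective 2 (hA.eigenvectorBasis.repr.injective this)

lemma eigen_dot (i : Fin n) :
    (hA.eigenvectorBasis i : Fin n → ℝ) ⬝ᵥ (hA.eigenvectorBasis i : Fin n → ℝ) = 1 ∧
    (hA.eigenvectorBasis i : Fin n → ℝ) ⬝ᵥ (A *ᵥ (hA.eigenvectorBasis i : Fin n → ℝ))
      = hA.eigenvalues i := by
  have h1 : (hA.eigenvectorBasis i : Fin n → ℝ) ⬝ᵥ (hA.eigenvectorBasis i : Fin n → ℝ) = 1 := by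
    have h := orthonormal_iff_ite.mp hA.eigenvectorBasis.orthonormal i i
    simp only [PiLp.inner_apply, RCLike.inner_apply, conj_trivial, if_pos rfl] at h
    exact h
  refine ⟨h1, ?_⟩
  have h2 : A *ᵥ (hA.eigenvectorBasis i : Fin n → ℝ)
      = hA.eigenvalues i • (hA.eigenvectorBasis i : Fin n → ℝ) := by
    erw [hA.mulVec_eigenvectorBasis]
  rw [h2, dotProduct_smul, h1, smul_eq_mul, mul_one]

lemma abs_eigenvalues_le (hnn : ∀ i j, 0 ≤ A i j) {ρ : ℝ}
    (hmax : ∀ i, hA.eigenvalues i ≤ ρ) (i : Fin n) : |hA.eigenvalues i| ≤ ρ := by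
  set v : Fin n → ℝ := (hA.eigenvectorBasis i : Fin n → ℝ) with hv
  obtain ⟨hvv, hvRv⟩ := eigen_dot hA i
  set w : Fin n → ℝ := fun k => |v k| with hwdef
  have hww : w ⬝ᵥ w = 1 := by
    rw [← hvv]
    simp only [dotProduct, hwdef, abs_mul_abs_self]
    rfl
  have h1 : w ⬝ᵥ (A *ᵥ w) ≤ ρ := by
    have := dot_mulVec_le hA hmax w
    rwa [hww, mul_one] at this
  have h2 : -(v ⬝ᵥ (A *ᵥ v)) ≤ w ⬝ᵥ (A *ᵥ w) := by
    rw [dot_mulVec_double A, dot_mulVec_double A, ← Finset.sum_neg_distrib]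
    refine Finset.sum_le_sum fun j _ => ?_
    rw [← Finset.sum_neg_distrib]
    refine Finset.sum_le_sum fun k _ => ?_
    have habs : |v j * (A j k * v k)| = w j * (A j k * w k) := by
      rw [abs_mul, abs_mul, abs_of_nonneg (hnn j k)]
    calc -(v j * (A j k * v k)) ≤ |v j * (A j k * v k)| := neg_le_abs _
      _ = w j * (A j k * w k) := habs
  rw [abs_le]
  constructor
  · rw [← hvRv] at *
    linarith
  · exact hmax i

end Spectral

/-! ### Matrix part: positivity of resistance distances -/

section MatrixPart
variable {n : ℕ} (G : SimpleGraph (Fin n)) [DecidableRel G.Adj]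

lemma posDef_M (hn : 0 < n) (hG : G.Connected) :
    (G.lapMatrix ℝ + (Fintype.card (Fin n) : ℝ)⁻¹ • allOnes (Fin n)).PosDef := by
  have hcard : (Fintype.card (Fin n) : ℝ) = (n : ℝ) := by simp
  have hnpos : (0 : ℝ) < n := by exact_mod_cast hn
  refine posDef_iff_dotProduct_mulVec.mpr ⟨?_, ?_⟩
  · have h1 : (G.lapMatrix ℝ).IsHermitian := (SimpleGraph.posSemidef_lapMatrix ℝ G).1
    show _ᴴ = _
    rw [conjTranspose_add, h1]
    congr 1
  · intro x hx
    rw [star_trivial, add_mulVec, dotProduct_add, smul_mulVec, dotProduct_smul]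
    have hJ : x ⬝ᵥ (allOnes (Fin n) *ᵥ x) = (∑ k, x k)^2 := by
      simp only [allOnes, mulVec, dotProduct, of_apply, one_mul]
      rw [← Finset.sum_mul, sq]
    have hL : 0 ≤ x ⬝ᵥ (G.lapMatrix ℝ *ᵥ x) := by
      have := (SimpleGraph.posSemidef_lapMatrix ℝ G).dotProduct_mulVec_nonneg x
      rwa [star_trivial] at this
    have hc : (0:ℝ) < (Fintype.card (Fin n) : ℝ)⁻¹ := by
      rw [hcard]; positivity
    by_cases hz : x ⬝ᵥ (G.lapMatrix ℝ *ᵥ x) = 0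
    · have hconst : ∀ i j : Fin n, x i = x j := by
        have h0 : Matrix.toLinearMap₂' ℝ (G.lapMatrix ℝ) x x = 0 := by
          rw [Matrix.toLinearMap₂'_apply']; exact hz
        intro i j
        exact (SimpleGraph.lapMatrix_toLinearMap₂'_apply'_eq_zero_iff_forall_reachable
          G x).1 h0 i j (hG.preconnected i j)
      have hsum : (∑ k, x k) ≠ 0 := by
        intro h0
        apply hx
        funext k
        have hxk : ∑ l, x l = (n : ℝ) * x k := by
          rw [Finset.sum_congr rfl fun l _ => hconst l k]
          simp [Finset.card_univ, mul_comm]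
        have h3 : (n : ℝ) * x k = 0 := by rw [← hxk, h0]
        rcases mul_eq_zero.1 h3 with h | h
        · exact absurd h (by positivity)
        · exact h
      rw [hz, hJ]
      have : 0 < (Fintype.card (Fin n) : ℝ)⁻¹ • (∑ k, x k)^2 := by
        rw [smul_eq_mul]
        have : 0 < (∑ k, x k)^2 := by positivity
        positivity
      linarith
    · have h1 : 0 < x ⬝ᵥ (G.lapMatrix ℝ *ᵥ x) := lt_of_le_of_ne hL (Ne.symm hz)
      have h2 : 0 ≤ (Fintype.card (Fin n) : ℝ)⁻¹ • (x ⬝ᵥ (allOnes (Fin n) *ᵥ x)) := by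
        rw [smul_eq_mul, hJ]; positivity
      linarith

lemma posDef_X (hn : 0 < n) (hG : G.Connected) :
    ((G.lapMatrix ℝ + (Fintype.card (Fin n) : ℝ)⁻¹ • allOnes (Fin n))⁻¹).PosDef :=
  (posDef_M G hn hG).inv

lemma resist_apply (i j : Fin n) :
    resistMatrix G i j =
      (G.lapMatrix ℝ + (Fintype.card (Fin n) : ℝ)⁻¹ • allOnes (Fin n))⁻¹ i i +
      (G.lapMatrix ℝ + (Fintype.card (Fin n) : ℝ)⁻¹ • allOnes (Fin n))⁻¹ j j -
      2 * (G.lapMatrix ℝ + (Fintype.card (Fin n) : ℝ)⁻¹ • allOnes (Fin n))⁻¹ i j := rfl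

lemma resist_diag (i : Fin n) : resistMatrix G i i = 0 := by
  rw [resist_apply]; ring

lemma resist_pos (hn : 0 < n) (hG : G.Connected) {i j : Fin n} (hij : i ≠ j) :
    0 < resistMatrix G i j := by
  set X := (G.lapMatrix ℝ + (Fintype.card (Fin n) : ℝ)⁻¹ • allOnes (Fin n))⁻¹ with hXdef
  have hX := posDef_X G hn hG
  have hsymm : ∀ a b : Fin n, X a b = X b a := by
    intro a b
    have := congrFun (congrFun hX.1 a) b
    rw [conjTranspose_apply, star_trivial] at this
    exact this.symm
  set d : Fin n → ℝ := Pi.single i 1 - Pi.single j 1 with hd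
  have hdne : d ≠ 0 := by
    intro h
    have := congrFun h i
    simp [hd, Pi.single_apply, hij] at this
  have hquad := hX.dotProduct_mulVec_pos hdne
  rw [star_trivial] at hquad
  have hcalc : d ⬝ᵥ (X *ᵥ d) = resistMatrix G i j := by
    rw [hd, resist_apply]
    rw [Matrix.mulVec_sub, Matrix.mulVec_single_one, Matrix.mulVec_single_one,
      sub_dotProduct, dotProduct_sub, dotProduct_sub,
      single_dotProduct, single_dotProduct, single_dotProduct, single_dotProduct]
    simp only [mul_one, one_mul, col_apply]
    rw [hsymm j i]
    ring
  rw [← hcalc]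
  exact hquad

lemma resist_nonneg (hn : 0 < n) (hG : G.Connected) (i j : Fin n) :
    0 ≤ resistMatrix G i j := by
  by_cases h : i = j
  · rw [h, resist_diag]
  · exact (resist_pos G hn hG h).le

lemma rdeg_pos (hn : 2 ≤ n) (hG : G.Connected) (i : Fin n) : 0 < rdeg G i := by
  have hnpos : 0 < n := by omega
  obtain ⟨j, hj⟩ := Fintype.exists_ne_of_one_lt_card (by simp; omega) i
  refine Finset.sum_pos' (fun k _ => resist_nonneg G hnpos hG i k) ⟨j, Finset.mem_univ j, ?_⟩
  exact resist_pos G hnpos hG (Ne.symm hj)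

end MatrixPart

theorem resistance_spectral_radius_lower_bound
    (n : ℕ) (hn : 2 ≤ n) (G : SimpleGraph (Fin n)) [DecidableRel G.Adj]
    (hG : G.Connected) (hR : (resistMatrix G).IsHermitian)
    (ρ : ℝ) (hρ : IsGreatest (Set.range hR.eigenvalues) ρ) :
    Real.sqrt ((∑ i, rdeg2 G i ^ 2) / (∑ i, rdeg G i ^ 2)) ≤ ρ ∧
    (ρ = Real.sqrt ((∑ i, rdeg2 G i ^ 2) / (∑ i, rdeg G i ^ 2)) ↔
      ∀ i j : Fin n, rdeg2 G i / rdeg G i = rdeg2 G j / rdeg G j) := by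
  classical
  have hnpos : 0 < n := by omega
  set R := resistMatrix G with hRdef
  set x : Fin n → ℝ := rdeg G with hxdef
  set T : Fin n → ℝ := rdeg2 G with hTdef
  have hRnn : ∀ i j, 0 ≤ R i j := resist_nonneg G hnpos hG
  have hRsym : ∀ i j, R i j = R j i := by
    intro i j
    have := congrFun (congrFun hR i) j
    rw [conjTranspose_apply, star_trivial] at this
    exact this.symm
  have hxpos : ∀ i, 0 < x i := rdeg_pos G hn hG
  have hTx : T = R *ᵥ x := funext fun i => rfl
  have hmax : ∀ i, hR.eigenvalues i ≤ ρ := fun i => hρ.2 ⟨i, rfl⟩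
  have habs : ∀ i, |hR.eigenvalues i| ≤ ρ := abs_eigenvalues_le hR hRnn hmax
  have hxx : 0 < x ⬝ᵥ x :=
    Finset.sum_pos (fun k _ => mul_pos (hxpos k) (hxpos k)) ⟨⟨0, hnpos⟩, Finset.mem_univ _⟩
  have hρpos : 0 < ρ := by
    have hle := dot_mulVec_le hR hmax x
    have i₀ : Fin n := ⟨0, hnpos⟩
    have hpos : 0 < x ⬝ᵥ (R *ᵥ x) := by
      rw [dot_mulVec_double R]
      refine Finset.sum_pos' (fun j _ => Finset.sum_nonneg fun k _ => ?_)
        ⟨⟨0, hnpos⟩, Finset.mem_univ _, ?_⟩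
      · exact mul_nonneg (hxpos j).le (mul_nonneg (hRnn j k) (hxpos k).le)
      · refine Finset.sum_pos' (fun k _ => mul_nonneg (hxpos _).le
          (mul_nonneg (hRnn _ k) (hxpos k).le)) ⟨⟨1, by omega⟩, Finset.mem_univ _, ?_⟩
        have hne : (⟨0, hnpos⟩ : Fin n) ≠ ⟨1, by omega⟩ := by
          intro h; exact absurd (congrArg Fin.val h) (by simp)
        exact mul_pos (hxpos _) (mul_pos (resist_pos G hnpos hG hne) (hxpos _))
    nlinarith
  have hsumT : ∑ i, T i ^ 2 = (R *ᵥ x) ⬝ᵥ (R *ᵥ x) := by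
    rw [← hTx]; simp [dotProduct, sq]
  have hsumx : ∑ i, x i ^ 2 = x ⬝ᵥ x := by simp [dotProduct, sq]
  have hsumx_pos : 0 < ∑ i, x i ^ 2 := by rw [hsumx]; exact hxx
  -- the inequality
  have hineq : Real.sqrt ((∑ i, T i ^ 2) / (∑ i, x i ^ 2)) ≤ ρ := by
    have hsq := dot_mulVec_sq_le hR habs x
    have hdivle : (∑ i, T i ^ 2) / (∑ i, x i ^ 2) ≤ ρ ^ 2 := by
      rw [div_le_iff₀ hsumx_pos, hsumT, hsumx]
      exact hsq
    calc Real.sqrt ((∑ i, T i ^ 2) / (∑ i, x i ^ 2)) ≤ Real.sqrt (ρ ^ 2) :=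
          Real.sqrt_le_sqrt hdivle
      _ = ρ := Real.sqrt_sq hρpos.le
  refine ⟨hineq, ?_, ?_⟩
  · -- equality implies pseudo resistance regular
    intro heq i j
    rcases Nat.lt_or_ge n 3 with h3 | h3
    · -- n = 2 : always pseudo resistance regular
      have hn2 : n = 2 := by omega
      subst hn2
      have key : ∀ k : Fin 2, T k / x k = R 0 1 := by
        have hx0 : x 0 = R 0 1 := by
          show rdeg G 0 = R 0 1
          rw [rdeg, Fin.sum_univ_two]
          have : resistMatrix G 0 0 = 0 := resist_diag G 0
          rw [this, zero_add]
        have hx1 : x 1 = R 0 1 := by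
          show rdeg G 1 = R 0 1
          rw [rdeg, Fin.sum_univ_two]
          have h10 : resistMatrix G 1 1 = 0 := resist_diag G 1
          rw [h10, add_zero]
          exact (hRsym 0 1).symm ▸ (hRsym 1 0)
        have hR01 : (0:ℝ) < R 0 1 := resist_pos G hnpos hG (by decide)
        intro k
        fin_cases k
        · show T 0 / x 0 = R 0 1
          have hT0 : T 0 = R 0 1 * R 0 1 := by
            show rdeg2 G 0 = R 0 1 * R 0 1
            rw [rdeg2, Fin.sum_univ_two]
            have : resistMatrix G 0 0 = 0 := resist_diag G 0
            rw [this, zero_mul, zero_add]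
            show R 0 1 * x 1 = R 0 1 * R 0 1
            rw [hx1]
          rw [hT0, hx0, mul_div_assoc, div_self hR01.ne', mul_one]
        · show T 1 / x 1 = R 0 1
          have hT1 : T 1 = R 0 1 * R 0 1 := by
            show rdeg2 G 1 = R 0 1 * R 0 1
            rw [rdeg2, Fin.sum_univ_two]
            have h11 : resistMatrix G 1 1 = 0 := resist_diag G 1
            rw [h11, zero_mul, add_zero]
            show R 1 0 * x 0 = R 0 1 * R 0 1
            rw [hx0, hRsym 1 0]
          rw [hT1, hx1, mul_div_assoc, div_self hR01.ne', mul_one]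
      rw [key i, key j]
    · -- n ≥ 3
      have hq0 : (0:ℝ) ≤ (∑ i, T i ^ 2) / (∑ i, x i ^ 2) := by
        apply div_nonneg _ hsumx_pos.le
        exact Finset.sum_nonneg fun k _ => sq_nonneg _
      have hρ2 : ρ ^ 2 = (∑ i, T i ^ 2) / (∑ i, x i ^ 2) := by
        rw [heq, Real.sq_sqrt hq0]
      have hsqeq : (R *ᵥ x) ⬝ᵥ (R *ᵥ x) = ρ ^ 2 * (x ⬝ᵥ x) := by
        rw [hρ2, ← hsumT, ← hsumx, div_mul_cancel₀ _ hsumx_pos.ne']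
      have hRRx : R *ᵥ (R *ᵥ x) = (ρ ^ 2) • x := mulVec_mulVec_of_dot_sq_eq hR habs x hsqeq
      set w : Fin n → ℝ := x - ρ⁻¹ • (R *ᵥ x) with hwdef
      by_cases hw : w = 0
      · -- x is an eigenvector : R x = ρ x
        have hRx : R *ᵥ x = ρ • x := by
          have h1 : x = ρ⁻¹ • (R *ᵥ x) := by
            have := sub_eq_zero.1 hw
            exact this
          funext k
          have := congrFun h1 k
          simp only [Pi.smul_apply, smul_eq_mul] at this ⊢
          field_simp at this
          rw [← this]; ring
        have hrat : ∀ k, T k / x k = ρ := by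
          intro k
          have : T k = ρ * x k := by
            rw [hTx, hRx]; rfl
          rw [this, mul_div_assoc, div_self (hxpos k).ne', mul_one]
        rw [hrat i, hrat j]
      · -- w ≠ 0 leads to a contradiction when n ≥ 3
        exfalso
        have hRw : R *ᵥ w = (-ρ) • w := by
          rw [hwdef, Matrix.mulVec_sub, Matrix.mulVec_smul, hRRx]
          funext k
          simp only [Pi.sub_apply, Pi.smul_apply, smul_eq_mul, Pi.neg_apply]
          field_simp
          ring
        set u : Fin n → ℝ := fun k => |w k| with hudef
        have huu : u ⬝ᵥ u = w ⬝ᵥ w := by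
          simp only [dotProduct, hudef, abs_mul_abs_self]
        have hwRw : w ⬝ᵥ (R *ᵥ w) = -ρ * (w ⬝ᵥ w) := by
          rw [hRw, dotProduct_smul, smul_eq_mul]
        have h1 : u ⬝ᵥ (R *ᵥ u) ≤ ρ * (w ⬝ᵥ w) := by
          have := dot_mulVec_le hR hmax u
          rwa [huu] at this
        have h2 : ρ * (w ⬝ᵥ w) ≤ u ⬝ᵥ (R *ᵥ u) := by
          have hmw : -(w ⬝ᵥ (R *ᵥ w)) ≤ u ⬝ᵥ (R *ᵥ u) := by
            rw [dot_mulVec_double R, dot_mulVec_double R, ← Finset.sum_neg_distrib]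
            refine Finset.sum_le_sum fun j' _ => ?_
            rw [← Finset.sum_neg_distrib]
            refine Finset.sum_le_sum fun k _ => ?_
            have habs' : |w j' * (R j' k * w k)| = u j' * (R j' k * u k) := by
              rw [abs_mul, abs_mul, abs_of_nonneg (hRnn j' k)]
            calc -(w j' * (R j' k * w k)) ≤ |w j' * (R j' k * w k)| := neg_le_abs _
              _ = u j' * (R j' k * u k) := habs'
          rw [hwRw] at hmw
          linarith
        have hequ : u ⬝ᵥ (R *ᵥ u) = ρ * (u ⬝ᵥ u) := by rw [huu]; linarith
        have hRu : R *ᵥ u = ρ • u := eq_of_dot_mulVec_eq hR hmax u hequ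
        -- termwise equality
        have hterm : ∀ j' k, u j' * (R j' k * u k) + w j' * (R j' k * w k) = 0 := by
          have hsum0 : ∑ j', ∑ k, (u j' * (R j' k * u k) + w j' * (R j' k * w k)) = 0 := by
            have e1 : ∑ j', ∑ k, (u j' * (R j' k * u k) + w j' * (R j' k * w k))
                = u ⬝ᵥ (R *ᵥ u) + w ⬝ᵥ (R *ᵥ w) := by
              rw [dot_mulVec_double R, dot_mulVec_double R, ← Finset.sum_add_distrib]
              refine Finset.sum_congr rfl fun j' _ => ?_
              rw [← Finset.sum_add_distrib]
            rw [e1, hequ, huu, hwRw]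
            ring
          have hnn : ∀ j' k, 0 ≤ u j' * (R j' k * u k) + w j' * (R j' k * w k) := by
            intro j' k
            have : |w j' * (R j' k * w k)| = u j' * (R j' k * u k) := by
              rw [abs_mul, abs_mul, abs_of_nonneg (hRnn j' k)]
            nlinarith [neg_abs_le (w j' * (R j' k * w k)), this]
          intro j' k
          have houter := (Finset.sum_eq_zero_iff_of_nonneg fun j'' _ =>
            Finset.sum_nonneg fun k' _ => hnn j'' k').1 hsum0 j' (Finset.mem_univ j')
          exact (Finset.sum_eq_zero_iff_of_nonneg fun k' _ => hnn j' k').1 houter k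
            (Finset.mem_univ k)
        -- every entry of w is nonzero
        have hallnz : ∀ k, w k ≠ 0 := by
          intro k0 hk0
          apply hw
          have hu0 : ∀ k, u k = 0 := by
            intro k
            by_cases hkk : k = k0
            · rw [hudef]; simp [hkk, hk0]
            · have hru := congrFun hRu k0
              have : (R *ᵥ u) k0 = 0 := by
                rw [hru]
                simp [Pi.smul_apply, hudef, hk0]
              have hsum0 : ∑ j', R k0 j' * u j' = 0 := this
              have := (Finset.sum_eq_zero_iff_of_nonneg fun j' _ =>
                mul_nonneg (hRnn k0 j') (abs_nonneg _)).1 hsum0 k (Finset.mem_univ k)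
              rcases mul_eq_zero.1 this with h | h
              · exact absurd h (resist_pos G hnpos hG (Ne.symm hkk)).ne'
              · exact h
          funext k
          have := hu0 k
          rw [hudef] at this
          exact abs_eq_zero.1 this
        -- three distinct indices give a contradiction
        have ha : (0:ℕ) < n := hnpos
        set a : Fin n := ⟨0, by omega⟩
        set b : Fin n := ⟨1, by omega⟩
        set c : Fin n := ⟨2, by omega⟩
        have hab : a ≠ b := by intro h; exact absurd (congrArg Fin.val h) (by simp [a, b])
        have hac : a ≠ c := by intro h; exact absurd (congrArg Fin.val h) (by simp [a, c])
        have hbc : b ≠ c := by intro h; exact absurd (congrArg Fin.val h) (by simp [b, c])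
        have hprod : ∀ {p q : Fin n}, p ≠ q → w p * w q < 0 := by
          intro p q hpq
          have ht := hterm p q
          have hRpq : 0 < R p q := resist_pos G hnpos hG hpq
          have : u p * u q + w p * w q = 0 := by
            have : R p q * (u p * u q + w p * w q) = 0 := by
              nlinarith [ht]
            rcases mul_eq_zero.1 this with h | h
            · exact absurd h hRpq.ne'
            · exact h
          have hupq : 0 < u p * u q := by
            rw [hudef]
            exact mul_pos (abs_pos.2 (hallnz p)) (abs_pos.2 (hallnz q))
          linarith
        have p1 := hprod hab
        have p2 := hprod hac
        have p3 := hprod hbc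
        nlinarith [sq_nonneg (w a * w b * w c), mul_pos_of_neg_of_neg p2 p3]
  · -- pseudo resistance regular implies equality
    intro hps
    obtain ⟨iρ, hiρ⟩ := hρ.1
    set i₀ : Fin n := ⟨0, hnpos⟩
    set c : ℝ := T i₀ / x i₀ with hcdef
    have hcx : R *ᵥ x = c • x := by
      rw [← hTx]
      funext k
      have h1 : T k / x k = c := hps k i₀
      have : T k = c * x k := by
        rw [← h1, div_mul_cancel₀ _ (hxpos k).ne']
      rw [this]; rfl
    set v : Fin n → ℝ := (hR.eigenvectorBasis iρ : Fin n → ℝ) with hvdef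
    obtain ⟨hvv, hvRv⟩ := eigen_dot hR iρ
    rw [hiρ] at hvRv
    set wv : Fin n → ℝ := fun k => |v k| with hwvdef
    have hwvwv : wv ⬝ᵥ wv = 1 := by
      rw [← hvv]
      simp only [dotProduct, hwvdef, abs_mul_abs_self]
      rfl
    have hle1 : wv ⬝ᵥ (R *ᵥ wv) ≤ ρ := by
      have := dot_mulVec_le hR hmax wv
      rwa [hwvwv, mul_one] at this
    have hge1 : ρ ≤ wv ⬝ᵥ (R *ᵥ wv) := by
      rw [← hvRv, dot_mulVec_double R, dot_mulVec_double R]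
      refine Finset.sum_le_sum fun j' _ => Finset.sum_le_sum fun k _ => ?_
      have habs' : |v j' * (R j' k * v k)| = wv j' * (R j' k * wv k) := by
        rw [abs_mul, abs_mul, abs_of_nonneg (hRnn j' k)]
      calc v j' * (R j' k * v k) ≤ |v j' * (R j' k * v k)| := le_abs_self _
        _ = wv j' * (R j' k * wv k) := habs'
    have heqwv : wv ⬝ᵥ (R *ᵥ wv) = ρ * (wv ⬝ᵥ wv) := by
      rw [hwvwv, mul_one]; linarith
    have hRwv : R *ᵥ wv = ρ • wv := eq_of_dot_mulVec_eq hR hmax wv heqwv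
    have hvne : ∃ k, v k ≠ 0 := by
      by_contra hcon
      push_neg at hcon
      have : v ⬝ᵥ v = 0 := by
        simp only [dotProduct]
        exact Finset.sum_eq_zero fun k _ => by rw [hcon k, mul_zero]
      rw [hvv] at this
      exact one_ne_zero this
    obtain ⟨k0, hk0⟩ := hvne
    have hwvx : 0 < wv ⬝ᵥ x := by
      refine Finset.sum_pos' (fun k _ => mul_nonneg (abs_nonneg _) (hxpos k).le)
        ⟨k0, Finset.mem_univ k0, mul_pos (abs_pos.2 hk0) (hxpos k0)⟩
    have hchain : ρ * (wv ⬝ᵥ x) = c * (wv ⬝ᵥ x) := by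
      have e1 : wv ⬝ᵥ (R *ᵥ x) = (R *ᵥ wv) ⬝ᵥ x := by
        rw [dotProduct_mulVec, ← Matrix.mulVec_transpose, show Rᵀ = R from hR]
      have e2 : wv ⬝ᵥ (R *ᵥ x) = c * (wv ⬝ᵥ x) := by
        rw [hcx, dotProduct_smul, smul_eq_mul]
      have e3 : (R *ᵥ wv) ⬝ᵥ x = ρ * (wv ⬝ᵥ x) := by
        rw [hRwv, smul_dotProduct, smul_eq_mul]
      rw [← e3, ← e1, e2]
    have hc : c = ρ := by
      have := mul_right_cancel₀ hwvx.ne' hchain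
      exact this.symm
    have hTc : ∀ k, T k = c * x k := by
      intro k
      have := congrFun hcx k
      rw [← hTx] at this
      simpa using this
    have hsum : (∑ i', T i' ^ 2) = c ^ 2 * ∑ i', x i' ^ 2 := by
      rw [Finset.mul_sum]
      exact Finset.sum_congr rfl fun k _ => by rw [hTc k]; ring
    rw [hsum, mul_div_assoc, div_self hsumx_pos.ne', mul_one, Real.sqrt_sq (hc ▸ hρpos.le), hc]
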